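/- (Liouville–von Neumann form of the internal dynamics.) Under the hypotheses of the Page–Wootters constraint (H_S, H_R Hermitian, ψ : Fin s × Fin r → ℂ with (H_S ⊗ 1 + 1 ⊗ H_R)ψ = 0, φ(t) = exp(−i·t·H_R) ·ᵥ φ₀, ψ_S(t)(m) = ∑_n conj(φ(t)(n))·ψ(m,n)), define ρ_S(t) ∈ M_{Fin s}(ℂ) by ρ_S(t)_{m m'} = ψ_S(t)(m) · conj(ψ_S(t)(m')). Then for every t ∈ ℝ, the matrix-valued function t ↦ ρ_S(t) is differentiable with derivative i·(ρ_S(t)·H_S − H_S·ρ_S(t)), i.e. ρ_S evolves by the Liouville–von Neumann equation (d/dt)ρ_S(t) = i·[ρ_S(t), H_S] with respect to the clock time t. -/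

import Mathlib

open Matrix BigOperators

section PageWoottersAux

section exp_entry
attribute [local instance] Matrix.linftyOpNormedRing Matrix.linftyOpNormedAlgebra

private lemma exp_entry_hasDerivAt {r : ℕ} (HR : Matrix (Fin r) (Fin r) ℂ) (t : ℝ) (n k : Fin r) :
    HasDerivAt (fun t : ℝ => NormedSpace.exp ((-(Complex.I * (t : ℂ))) • HR) n k)
      (((-Complex.I) •
        (NormedSpace.exp ((-(Complex.I * (t : ℂ))) • HR) * HR)) n k) t := by
  have hE : ∀ z : ℂ, HasDerivAt (fun z : ℂ => NormedSpace.exp (z • HR))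
      (NormedSpace.exp (z • HR) * HR) z := fun z => hasDerivAt_exp_smul_const HR z
  have hc : HasDerivAt (fun t : ℝ => -(Complex.I * (t : ℂ))) (-Complex.I) t := by
    have := ((hasDerivAt_id t).ofReal_comp.const_mul Complex.I).fun_neg
    simpa using this
  have hcomp : HasDerivAt (fun t : ℝ => NormedSpace.exp ((-(Complex.I * (t : ℂ))) • HR))
      ((-Complex.I) • (NormedSpace.exp ((-(Complex.I * (t : ℂ))) • HR) * HR)) t :=
    (hE _).scomp t hc
  have := ((((Matrix.entryLinearMap ℂ ℂ n k).toContinuousLinearMap).restrictScalars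
      ℝ).hasFDerivAt.comp_hasDerivAt t hcomp)
  exact this

private lemma exp_comm {r : ℕ} (HR : Matrix (Fin r) (Fin r) ℂ) (t : ℝ) :
    NormedSpace.exp ((-(Complex.I * (t : ℂ))) • HR) * HR
      = HR * NormedSpace.exp ((-(Complex.I * (t : ℂ))) • HR) :=
  (((Commute.refl HR).smul_right (-(Complex.I * (t : ℂ)))).exp_right).symm.eq

end exp_entry

private lemma phi_entry_hasDerivAt {r : ℕ} (HR : Matrix (Fin r) (Fin r) ℂ)
    (φ₀ : Fin r → ℂ) (t : ℝ) (n : Fin r) :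
    HasDerivAt
      (fun t : ℝ => (NormedSpace.exp ((-(Complex.I * (t : ℂ))) • HR)).mulVec φ₀ n)
      ((-Complex.I) *
        ∑ k, HR n k * (NormedSpace.exp ((-(Complex.I * (t : ℂ))) • HR)).mulVec φ₀ k) t := by
  set E := fun t : ℝ => NormedSpace.exp ((-(Complex.I * (t : ℂ))) • HR) with hE
  have h1 : HasDerivAt (fun t : ℝ => ∑ k, E t n k * φ₀ k)
      (∑ k, ((-Complex.I) • (E t * HR)) n k * φ₀ k) t :=
    HasDerivAt.fun_sum fun k _ => (exp_entry_hasDerivAt HR t n k).mul_const (φ₀ k)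
  have hfun : (fun t : ℝ => (E t).mulVec φ₀ n) = fun t : ℝ => ∑ k, E t n k * φ₀ k := by
    funext u; simp [Matrix.mulVec, dotProduct]
  rw [hfun]
  convert h1 using 1
  have hcomm := exp_comm HR t
  calc (-Complex.I) * ∑ k, HR n k * (E t).mulVec φ₀ k
      = (-Complex.I) * ((HR * E t).mulVec φ₀ n) := by
        rw [← Matrix.mulVec_mulVec]
        simp [Matrix.mulVec, dotProduct]
    _ = (-Complex.I) * ((E t * HR).mulVec φ₀ n) := by rw [hcomm]
    _ = ∑ k, ((-Complex.I) • (E t * HR)) n k * φ₀ k := by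
        simp [Matrix.mulVec, dotProduct, Finset.mul_sum, mul_assoc]

/-- The key sum identity coming from the Page–Wootters constraint. -/
private lemma constraint_sum {s r : ℕ} (HS : Matrix (Fin s) (Fin s) ℂ)
    (HR : Matrix (Fin r) (Fin r) ℂ) (hHR : HR.IsHermitian) (ψ : Fin s × Fin r → ℂ)
    (hconstraint : ∀ (m : Fin s) (n : Fin r),
      (∑ m', HS m m' * ψ (m', n)) + ∑ n', HR n n' * ψ (m, n') = 0)
    (c : Fin r → ℂ) (ψS : Fin s → ℂ)
    (hψS : ∀ m, ψS m = ∑ n, (starRingEnd ℂ) (c n) * ψ (m, n)) (m : Fin s) :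
    ∑ n, (starRingEnd ℂ) ((-Complex.I) * ∑ k, HR n k * c k) * ψ (m, n)
      = (-Complex.I) * ∑ k, HS m k * ψS k := by
  have hcon : ∀ k : Fin r, ∑ n, HR k n * ψ (m, n) = -∑ m'', HS m m'' * ψ (m'', k) := by
    intro k; linear_combination hconstraint m k
  have hherm : ∀ n k, (starRingEnd ℂ) (HR n k) = HR k n := fun n k => hHR.apply k n
  calc ∑ n, (starRingEnd ℂ) ((-Complex.I) * ∑ k, HR n k * c k) * ψ (m, n)
      = ∑ n, ∑ k, Complex.I * ((starRingEnd ℂ) (c k) * (HR k n * ψ (m, n))) := by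
        refine Finset.sum_congr rfl fun n _ => ?_
        rw [_root_.map_mul, map_sum]
        simp only [map_neg, Complex.conj_I, neg_neg, _root_.map_mul, hherm]
        rw [mul_assoc, Finset.sum_mul, Finset.mul_sum]
        exact Finset.sum_congr rfl fun k _ => by ring
    _ = ∑ k, Complex.I * ((starRingEnd ℂ) (c k) * ∑ n, HR k n * ψ (m, n)) := by
        rw [Finset.sum_comm]
        exact Finset.sum_congr rfl fun k _ => by rw [Finset.mul_sum, Finset.mul_sum]
    _ = ∑ k, Complex.I * ((starRingEnd ℂ) (c k) * -∑ m'', HS m m'' * ψ (m'', k)) := by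
        exact Finset.sum_congr rfl fun k _ => by rw [hcon k]
    _ = ∑ k, ∑ m'', (-Complex.I) * (HS m m'' * ((starRingEnd ℂ) (c k) * ψ (m'', k))) := by
        refine Finset.sum_congr rfl fun k _ => ?_
        rw [mul_neg, mul_neg, Finset.mul_sum, Finset.mul_sum, ← Finset.sum_neg_distrib]
        exact Finset.sum_congr rfl fun m'' _ => by ring
    _ = (-Complex.I) * ∑ k, HS m k * ψS k := by
        rw [Finset.sum_comm, Finset.mul_sum]
        refine Finset.sum_congr rfl fun m'' _ => ?_
        rw [hψS m'', Finset.mul_sum, Finset.mul_sum]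

/-- The algebraic identity for the entries of the commutator. -/
private lemma commutator_entry {s : ℕ} (HS : Matrix (Fin s) (Fin s) ℂ) (hHS : HS.IsHermitian)
    (ψS : Fin s → ℂ) (ρ : Matrix (Fin s) (Fin s) ℂ)
    (hρ : ∀ m m', ρ m m' = ψS m * (starRingEnd ℂ) (ψS m')) (m m' : Fin s) :
    (Complex.I • (ρ * HS - HS * ρ)) m m'
      = ((-Complex.I) * ∑ k, HS m k * ψS k) * (starRingEnd ℂ) (ψS m')
        + ψS m * (starRingEnd ℂ) ((-Complex.I) * ∑ k, HS m' k * ψS k) := by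
  have hherm : ∀ a b, (starRingEnd ℂ) (HS a b) = HS b a := fun a b => hHS.apply b a
  simp only [Matrix.smul_apply, Matrix.sub_apply, Matrix.mul_apply, hρ, smul_eq_mul]
  rw [mul_sub, Finset.mul_sum, Finset.mul_sum, sub_eq_neg_add]
  congr 1
  · rw [neg_mul, neg_mul, mul_assoc, Finset.sum_mul, Finset.mul_sum, neg_inj]
    exact Finset.sum_congr rfl fun k _ => by ring
  · rw [_root_.map_mul, map_sum]
    simp only [_root_.map_mul, hherm, Complex.conj_I, map_neg, neg_neg]
    rw [Finset.mul_sum, Finset.mul_sum]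
    exact Finset.sum_congr rfl fun k _ => by ring

end PageWoottersAux

attribute [local instance] Matrix.normedAddCommGroup Matrix.normedSpace

/-- Liouville–von Neumann form of the internal dynamics: the density
matrix ρ_S(t) = |ψ_S(t)⟩⟨ψ_S(t)| of the relative state evolves by
(d/dt) ρ_S(t) = i·[ρ_S(t), H_S] with respect to the clock time t. -/
theorem page_wootters_liouville_von_neumann {s r : ℕ}
    (HS : Matrix (Fin s) (Fin s) ℂ) (HR : Matrix (Fin r) (Fin r) ℂ)
    (hHS : HS.IsHermitian) (hHR : HR.IsHermitian)
    (ψ : Fin s × Fin r → ℂ)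
    (hconstraint : ∀ (m : Fin s) (n : Fin r),
      (∑ m', HS m m' * ψ (m', n)) + ∑ n', HR n n' * ψ (m, n') = 0)
    (φ₀ : Fin r → ℂ)
    (φ : ℝ → Fin r → ℂ)
    (hφ : ∀ t : ℝ, φ t = (NormedSpace.exp ((-(Complex.I * (t : ℂ))) • HR)).mulVec φ₀)
    (ψS : ℝ → Fin s → ℂ)
    (hψS : ∀ (t : ℝ) (m : Fin s), ψS t m = ∑ n, (starRingEnd ℂ) (φ t n) * ψ (m, n))
    (ρS : ℝ → Matrix (Fin s) (Fin s) ℂ)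
    (hρS : ∀ (t : ℝ) (m m' : Fin s), ρS t m m' = ψS t m * (starRingEnd ℂ) (ψS t m')) :
    ∀ t : ℝ, HasDerivAt ρS (Complex.I • (ρS t * HS - HS * ρS t)) t := by
  intro t
  -- derivative of the entries of φ
  have hφd : ∀ n, HasDerivAt (fun t => φ t n)
      ((-Complex.I) * ∑ k, HR n k * φ t k) t := by
    intro n
    have h := phi_entry_hasDerivAt HR φ₀ t n
    have hfun : (fun t : ℝ => φ t n)
        = fun t : ℝ => (NormedSpace.exp ((-(Complex.I * (t : ℂ))) • HR)).mulVec φ₀ n := by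
      funext u; rw [hφ u]
    rw [hfun, hφ t]
    exact h
  -- Schrödinger equation for ψS
  have hψd : ∀ m, HasDerivAt (fun t => ψS t m)
      ((-Complex.I) * ∑ k, HS m k * ψS t k) t := by
    intro m
    have h1 : HasDerivAt (fun t => ∑ n, (starRingEnd ℂ) (φ t n) * ψ (m, n))
        (∑ n, (starRingEnd ℂ) ((-Complex.I) * ∑ k, HR n k * φ t k) * ψ (m, n)) t :=
      HasDerivAt.fun_sum fun n _ => ((hφd n).star.mul_const (ψ (m, n)) : _)
    have hfun : (fun t : ℝ => ψS t m)
        = fun t : ℝ => ∑ n, (starRingEnd ℂ) (φ t n) * ψ (m, n) := by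
      funext u; rw [hψS u]
    rw [hfun, ← constraint_sum HS HR hHR ψ hconstraint (φ t) (ψS t) (hψS t) m]
    exact h1
  -- product rule, entrywise
  refine hasDerivAt_pi.2 ?_
  intro m
  rw [hasDerivAt_pi]
  intro m'
  have hentry : HasDerivAt (fun t => ψS t m * (starRingEnd ℂ) (ψS t m'))
      (((-Complex.I) * ∑ k, HS m k * ψS t k) * (starRingEnd ℂ) (ψS t m')
        + ψS t m * (starRingEnd ℂ) ((-Complex.I) * ∑ k, HS m' k * ψS t k)) t :=
    ((hψd m).mul ((hψd m').star) : _)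
  have hfun : (fun t : ℝ => ρS t m m') = fun t : ℝ => ψS t m * (starRingEnd ℂ) (ψS t m') := by
    funext u; rw [hρS u]
  rw [show (fun t : ℝ => ρS t m m') = fun t : ℝ => ρS t m m' from rfl, hfun,
    commutator_entry HS hHS (ψS t) (ρS t) (hρS t) m m']
  exact hentry
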